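/- Define a : ℕ → ℕ by a_0 = 1, a_1 = 1, and a_{n+2} = \sum_{k=0}^{n} a_k·a_{n-k}. Then the ordinary generating function A(X) = \sum_{n\ge 0} a_n X^n, viewed as a formal power series over ℚ, satisfies (1 - 2X²·A)² = 1 - 4X² - 4X³; equivalently X²·A² = A - 1 - X, so that A = (1 - \sqrt{1 - 4x² - 4x³})/(2x²). -/

import Mathlib

/-- Let `a 0 = 1`, `a 1 = 1` and `a (n+2) = ∑_{k=0}^{n} a k * a (n-k)` (the eigen-sequence
of `R² ∘ CONV`, `[1,1,1,2,3,6,11,22,44,90,187,...]`).  Its ordinary generating function `A`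
over `ℚ` satisfies `(1 - 2X²A)² = 1 - 4X² - 4X³`, equivalently `X²A² = A - 1 - X`, so that
`A = (1 - √(1 - 4x² - 4x³))/(2x²)`. -/
theorem conv_shift_two_eigen_sequence (a : ℕ → ℕ) (h0 : a 0 = 1) (h1 : a 1 = 1)
    (hrec : ∀ n : ℕ, a (n + 2) = ∑ k ∈ Finset.range (n + 1), a k * a (n - k)) :
    (1 - 2 * PowerSeries.X ^ 2 * PowerSeries.mk (fun n => (a n : ℚ))) ^ 2 =
        1 - 4 * PowerSeries.X ^ 2 - 4 * PowerSeries.X ^ 3 ∧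
    PowerSeries.X ^ 2 * PowerSeries.mk (fun n => (a n : ℚ)) ^ 2 =
        PowerSeries.mk (fun n => (a n : ℚ)) - 1 - PowerSeries.X := by
  set A := PowerSeries.mk (fun n => (a n : ℚ)) with hA
  have key : PowerSeries.X ^ 2 * A ^ 2 = A - 1 - PowerSeries.X := by
    ext n
    rw [PowerSeries.coeff_X_pow_mul']
    simp only [map_sub, PowerSeries.coeff_mk, PowerSeries.coeff_one, PowerSeries.coeff_X, hA]
    match n with
    | 0 => simp [h0]
    | 1 => simp [h1]
    | n + 2 =>
      simp only [Nat.add_sub_cancel, if_pos (by norm_num : 2 ≤ n + 2)]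
      rw [sq, PowerSeries.coeff_mul, Finset.Nat.sum_antidiagonal_eq_sum_range_succ
        (f := fun i j => (PowerSeries.coeff i A) * (PowerSeries.coeff j A))]
      simp only [PowerSeries.coeff_mk, hrec n]
      push_cast
      simp [hA]
  refine ⟨?_, key⟩
  linear_combination (4 * PowerSeries.X ^ 2 : PowerSeries ℚ) * key
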